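/- Let f : ℝ → ℝ be continuous and 1-periodic (f(x+1) = f(x) for all x), and suppose f is non-constant. Then the set P = {(x, y) ∈ ℝ² : f(x) = f(y), 0 ≤ y - x ≤ 1/2} contains, for the induced equivalence on the circle ℝ/ℤ, both a pair with y - x = 1/2 (a pair of 'antipodal' points) and a pair with y = x; moreover there is a connected subset of {(x,y) ∈ (ℝ/ℤ)² : f(x) = f(y)} containing both such pairs. -/

import Mathlib

open Set


namespace S18

abbrev Cell := ℤ × ℤ

def dirsY : List Cell := [(1,0),(-1,0),(0,1),(0,-1),(1,-1),(-1,1)]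
def dirsR : List Cell := [(1,0),(-1,0),(0,1),(0,-1),(1,1),(-1,-1)]

def AdjY (u v : Cell) : Prop := v - u ∈ dirsY
def AdjR (u v : Cell) : Prop := v - u ∈ dirsR

def Conn (A : Cell → Cell → Prop) (P : Cell → Prop) : Cell → Cell → Prop :=
  Relation.ReflTransGen (fun a b => A a b ∧ P b)

lemma conn_mono {A} {P Q : Cell → Prop} (h : ∀ v, P v → Q v) {u v} :
    Conn A P u v → Conn A Q u v :=
  fun hc => Relation.ReflTransGen.mono (r := fun a b => A a b ∧ P b) (p := fun a b => A a b ∧ Q b)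
    (fun _ _ hab => ⟨hab.1, h _ hab.2⟩) _ _ hc

lemma conn_last {A} {P : Cell → Prop} {u v} (h : Conn A P u v) (hu : P u) : P v := by
  induction h with
  | refl => exact hu
  | tail _ h2 _ => exact h2.2

lemma neg_mem_dirsY : ∀ d ∈ dirsY, -d ∈ dirsY := by decide

lemma adjY_symm {u v : Cell} (h : AdjY u v) : AdjY v u := by
  have hd : u - v = -(v - u) := by ring
  unfold AdjY at h ⊢
  rw [hd]
  exact neg_mem_dirsY _ h

lemma conn_symm {P : Cell → Prop} {u v} (hu : P u) (h : Conn AdjY P u v) :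
    Conn AdjY P v u := by
  induction h with
  | refl => exact .refl
  | @tail w x _ h2 ih =>
    exact .trans (.single ⟨adjY_symm h2.1, conn_last ‹Conn AdjY P u w› hu⟩) ih

lemma cross {α : Type*} {R : α → α → Prop} {φ : α → ℤ}
    (hstep : ∀ a b, R a b → |φ b - φ a| ≤ 1) {u v : α}
    (h : Relation.ReflTransGen R u v) {m : ℤ} (hv : φ v ≤ m) :
    m < φ u → ∃ w, φ w = m ∧ Relation.ReflTransGen (fun a b => R a b ∧ m ≤ φ b) u w := by
  induction h using Relation.ReflTransGen.head_induction_on with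
  | refl => intro hu; omega
  | @head a b hab hbv ih =>
    intro ha
    by_cases hb : m < φ b
    · obtain ⟨w, hw1, hw2⟩ := ih hb
      exact ⟨w, hw1, .head ⟨hab, le_of_lt hb⟩ hw2⟩
    · have h1 := hstep a b hab
      rw [abs_le] at h1
      have hbm : φ b = m := by omega
      exact ⟨b, hbm, .single ⟨hab, le_of_eq hbm.symm⟩⟩

lemma cross' {α : Type*} {R : α → α → Prop} {φ : α → ℤ}
    (hstep : ∀ a b, R a b → |φ b - φ a| ≤ 1) {u v : α}
    (h : Relation.ReflTransGen R u v) {m : ℤ} (hv : m ≤ φ v) :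
    φ u < m → ∃ w, φ w = m ∧ Relation.ReflTransGen (fun a b => R a b ∧ φ b ≤ m) u w := by
  intro hu
  have hstep' : ∀ a b, R a b → |(fun x => -φ x) b - (fun x => -φ x) a| ≤ 1 := by
    intro a b hab
    have h1 := hstep a b hab
    rw [abs_le] at h1 ⊢
    simp only []
    omega
  obtain ⟨w, hw1, hw2⟩ := cross (φ := fun x => -φ x) hstep' h (m := -m)
    (by omega) (by omega)
  have hw1' : -φ w = -m := hw1
  refine ⟨w, by omega, Relation.ReflTransGen.mono ?_ _ _ hw2⟩
  intro a b hab
  obtain ⟨h1, h2⟩ := hab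
  have h2' : -m ≤ -φ b := h2
  exact ⟨h1, by omega⟩

-- Y-board machinery
def YB (n : ℕ) (v : Cell) : Prop := 0 ≤ v.1 ∧ 0 ≤ v.2 ∧ v.1 + v.2 ≤ (n : ℤ)

def maj (a b c : Bool) : Bool := (a && b) || (a && c) || (b && c)

def YP (n : ℕ) (c : Cell → Bool) (b : Bool) (v : Cell) : Prop := YB n v ∧ c v = b

def YWin (n : ℕ) (c : Cell → Bool) (b : Bool) : Prop :=
  ∃ p q r : Cell, YP n c b p ∧ YP n c b q ∧ YP n c b r ∧
    p.1 = 0 ∧ q.2 = 0 ∧ r.1 + r.2 = (n : ℤ) ∧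
    Conn AdjY (YP n c b) p q ∧ Conn AdjY (YP n c b) p r

def off : Fin 3 → Cell
  | 0 => (0,0)
  | 1 => (1,0)
  | 2 => (0,1)

def inTri (u a : Cell) : Prop := ∃ i : Fin 3, a = u + off i

lemma maj_spec : ∀ a0 a1 a2 b : Bool, maj a0 a1 a2 = b →
    ((a0 = b ∧ a1 = b) ∨ (a0 = b ∧ a2 = b) ∨ (a1 = b ∧ a2 = b)) := by decide

lemma tri_mem_board {n : ℕ} {u : Cell} (hu : YB n u) (i : Fin 3) : YB (n+1) (u + off i) := by
  obtain ⟨h1, h2, h3⟩ := hu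
  fin_cases i <;>
    simp only [off, YB, Prod.fst_add, Prod.snd_add] <;>
    push_cast <;> omega

lemma tri_pair : ∀ i j : Fin 3, off i = off j ∨ off j - off i ∈ dirsY := by decide

set_option synthInstance.maxSize 1024 in
lemma key : ∀ d ∈ dirsY, ∀ su sv : Fin 3 → Bool,
    (su 0 && su 1 || su 0 && su 2 || su 1 && su 2) = true →
    (sv 0 && sv 1 || sv 0 && sv 2 || sv 1 && sv 2) = true →
    ∃ i j : Fin 3, su i = true ∧ sv j = true ∧
      (off i = d + off j ∨ (d + off j) - off i ∈ dirsY) := by decide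


def majc (c : Cell → Bool) (v : Cell) : Bool :=
  maj (c (v + off 0)) (c (v + off 1)) (c (v + off 2))

lemma off_zero : off 0 = 0 := rfl

lemma two_of : ∀ x y z b : Bool, maj x y z = b →
    ((x == b) && (y == b) || (x == b) && (z == b) || (y == b) && (z == b)) = true := by decide

lemma exists_tri_cell {c : Cell → Bool} {b : Bool} {u : Cell} (h : majc c u = b) :
    ∃ i : Fin 3, c (u + off i) = b := by
  rcases maj_spec _ _ _ _ h with ⟨h1, _⟩ | ⟨h1, _⟩ | ⟨h1, _⟩
  · exact ⟨0, h1⟩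
  · exact ⟨0, h1⟩
  · exact ⟨1, h1⟩

lemma pick1 {c : Cell → Bool} {b : Bool} {u : Cell} (h : majc c u = b) :
    ∃ i : Fin 3, (off i).1 = 0 ∧ c (u + off i) = b := by
  rcases maj_spec _ _ _ _ h with ⟨h1, _⟩ | ⟨h1, _⟩ | ⟨_, h2⟩
  · exact ⟨0, rfl, h1⟩
  · exact ⟨0, rfl, h1⟩
  · exact ⟨2, rfl, h2⟩

lemma pick2 {c : Cell → Bool} {b : Bool} {u : Cell} (h : majc c u = b) :
    ∃ i : Fin 3, (off i).2 = 0 ∧ c (u + off i) = b := by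
  rcases maj_spec _ _ _ _ h with ⟨h1, _⟩ | ⟨h1, _⟩ | ⟨h1, _⟩
  · exact ⟨0, rfl, h1⟩
  · exact ⟨0, rfl, h1⟩
  · exact ⟨1, rfl, h1⟩

lemma pick3 {c : Cell → Bool} {b : Bool} {u : Cell} (h : majc c u = b) :
    ∃ i : Fin 3, (off i).1 + (off i).2 = 1 ∧ c (u + off i) = b := by
  rcases maj_spec _ _ _ _ h with ⟨_, h2⟩ | ⟨_, h2⟩ | ⟨_, h2⟩
  · exact ⟨1, rfl, h2⟩
  · exact ⟨2, rfl, h2⟩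
  · exact ⟨2, rfl, h2⟩

lemma within_tri {n : ℕ} {c : Cell → Bool} {b : Bool} {u : Cell} (hu : YB n u) {a a' : Cell}
    (ha : inTri u a) (ha' : inTri u a') (hca' : c a' = b) :
    Conn AdjY (YP (n+1) c b) a a' := by
  obtain ⟨i, rfl⟩ := ha
  obtain ⟨j, rfl⟩ := ha'
  rcases tri_pair i j with h | h
  · rw [h]
    exact Relation.ReflTransGen.refl
  · refine Relation.ReflTransGen.single ⟨?_, tri_mem_board hu j, hca'⟩
    unfold AdjY
    have hh : (u + off j) - (u + off i) = off j - off i := by ring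
    rw [hh]
    exact h

lemma bridge {n : ℕ} {c : Cell → Bool} {b : Bool} {u v : Cell} (hadj : AdjY u v)
    (hu : YB n u) (hv : YB n v) (hcu : majc c u = b) (hcv : majc c v = b) :
    ∀ a, inTri u a → ∀ a', inTri v a' → c a' = b →
    Conn AdjY (YP (n+1) c b) a a' := by
  intro a ha a' ha' hca'
  have hvd : v = u + (v - u) := by ring
  obtain ⟨i, j, hi, hj, hcase⟩ := key (v - u) hadj
    (fun i => c (u + off i) == b) (fun j => c (v + off j) == b)
    (two_of _ _ _ _ hcu) (two_of _ _ _ _ hcv)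
  have hs : c (u + off i) = b := by simpa using hi
  have hs' : c (v + off j) = b := by simpa using hj
  have conn1 : Conn AdjY (YP (n+1) c b) a (u + off i) := within_tri hu ha ⟨i, rfl⟩ hs
  have conn3 : Conn AdjY (YP (n+1) c b) (v + off j) a' := within_tri hv ⟨j, rfl⟩ ha' hca'
  have conn2 : Conn AdjY (YP (n+1) c b) (u + off i) (v + off j) := by
    rcases hcase with h | h
    · have he : u + off i = v + off j := by
        rw [hvd]; rw [h]; ring
      rw [he]
      exact Relation.ReflTransGen.refl
    · refine Relation.ReflTransGen.single ⟨?_, tri_mem_board hv j, hs'⟩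
      unfold AdjY
      have hh : (v + off j) - (u + off i) = ((v - u) + off j) - off i := by ring
      rw [hh]
      exact h
  exact conn1.trans (conn2.trans conn3)

lemma lift_conn {n : ℕ} {c : Cell → Bool} {b : Bool} {u v : Cell}
    (h : Conn AdjY (YP n (majc c) b) u v) (hu : YP n (majc c) b u) :
    ∀ a, inTri u a → ∀ a', inTri v a' → c a' = b →
    Conn AdjY (YP (n+1) c b) a a' := by
  induction h with
  | refl => intro a ha a' ha' hca'; exact within_tri hu.1 ha ha' hca'
  | @tail w x hw hstep ih =>
    intro a ha a' ha' hca'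
    have hw' : YP n (majc c) b w := conn_last hw hu
    obtain ⟨s, hsc⟩ := exists_tri_cell hw'.2
    exact (ih a ha _ ⟨s, rfl⟩ hsc).trans
      (bridge hstep.1 hw'.1 hstep.2.1 hw'.2 hstep.2.2 _ ⟨s, rfl⟩ a' ha' hca')

theorem yTheorem : ∀ (n : ℕ) (c : Cell → Bool), ∃ b, YWin n c b := by
  intro n
  induction n with
  | zero =>
    intro c
    refine ⟨c (0,0), (0,0), (0,0), (0,0), ?_, ?_, ?_, rfl, rfl, by simp, .refl, .refl⟩ <;>
      exact ⟨⟨le_refl 0, le_refl 0, by simp⟩, rfl⟩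
  | succ n IH =>
    intro c
    obtain ⟨b, p, q, r, hp, hq, hr, hp1, hq2, hr3, cpq, cpr⟩ := IH (majc c)
    obtain ⟨i, hi0, hic⟩ := pick1 hp.2
    obtain ⟨j, hj0, hjc⟩ := pick2 hq.2
    obtain ⟨k, hk0, hkc⟩ := pick3 hr.2
    refine ⟨b, p + off i, q + off j, r + off k,
      ⟨tri_mem_board hp.1 i, hic⟩, ⟨tri_mem_board hq.1 j, hjc⟩, ⟨tri_mem_board hr.1 k, hkc⟩,
      ?_, ?_, ?_, ?_, ?_⟩
    · simp [Prod.fst_add, hp1, hi0]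
    · simp [Prod.snd_add, hq2, hj0]
    · have : (r + off k).1 + (r + off k).2 = (r.1 + r.2) + ((off k).1 + (off k).2) := by
        simp [Prod.fst_add, Prod.snd_add]; ring
      rw [this, hr3, hk0]
      push_cast
      ring
    · exact lift_conn cpq hp _ ⟨i, rfl⟩ _ ⟨j, rfl⟩ hjc
    · exact lift_conn cpr hp _ ⟨i, rfl⟩ _ ⟨k, rfl⟩ hkc


lemma rtg_map {α β : Type*} {R : α → α → Prop} {S : β → β → Prop} (g : α → β)
    (hg : ∀ a b, R a b → S (g a) (g b)) {u v : α} (h : Relation.ReflTransGen R u v) :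
    Relation.ReflTransGen S (g u) (g v) := by
  induction h with
  | refl => exact .refl
  | tail _ h2 ih => exact ih.tail (hg _ _ h2)

def RB (W H : ℤ) (v : Cell) : Prop := 0 ≤ v.1 ∧ v.1 ≤ W ∧ 0 ≤ v.2 ∧ v.2 ≤ H

lemma dirsY_sum : ∀ d ∈ dirsY, -1 ≤ d.1 + d.2 ∧ d.1 + d.2 ≤ 1 := by decide
lemma dirsY_fst : ∀ d ∈ dirsY, -1 ≤ d.1 ∧ d.1 ≤ 1 := by decide
lemma dirsY_to_R : ∀ d ∈ dirsY, ((d.1 : ℤ), d.2 + d.1) ∈ dirsR := by decide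

theorem disc (W H : ℕ) (hW : 1 ≤ W) (hH : 1 ≤ H) (γ : Cell → Bool) :
    (∃ zt zb : Cell, zt.2 = (H:ℤ) ∧ zb.2 = 0 ∧ (RB W H zt ∧ γ zt = true) ∧
        Conn AdjR (fun v => RB W H v ∧ γ v = true) zt zb) ∨
    (∃ zl zr : Cell, zl.1 = 0 ∧ zr.1 = (W:ℤ) ∧ (RB W H zl ∧ γ zl = false) ∧
        Conn AdjR (fun v => RB W H v ∧ γ v = false) zl zr) := by
  classical
  set ψ : Cell → Cell := fun v => (v.1, v.2 - W + v.1) with hψ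
  set ct : Cell → Bool := fun v =>
    if v.1 + v.2 < (W:ℤ) then true else if (W:ℤ) < v.1 then false else γ (ψ v) with hct
  have hadjψ : ∀ a b : Cell, AdjY a b → AdjR (ψ a) (ψ b) := by
    intro a b hab
    have h1 := dirsY_to_R _ hab
    have h2 : ψ b - ψ a = ((b - a).1, (b - a).2 + (b - a).1) := by
      simp only [hψ, Prod.ext_iff, Prod.fst_sub, Prod.snd_sub]
      exact ⟨trivial, by ring⟩
    unfold AdjR
    rw [h2]
    exact h1
  obtain ⟨b, p, q, r, hp, hq, hr, hp1, hq2, hr3, cpq, cpr⟩ := yTheorem (W + H) ct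
  have hnz : (W:ℤ) + (H:ℤ) = ((W + H : ℕ) : ℤ) := by push_cast; ring
  cases b with
  | true =>
    left
    have crq : Conn AdjY (YP (W+H) ct true) r q := (conn_symm hp cpr).trans cpq
    have hstep : ∀ a b : Cell, (AdjY a b ∧ YP (W+H) ct true b) →
        |(b.1 + b.2) - (a.1 + a.2)| ≤ 1 := by
      intro a b hab
      have h1 := dirsY_sum _ hab.1
      have h2 : (b - a).1 = b.1 - a.1 := rfl
      have h3 : (b - a).2 = b.2 - a.2 := rfl
      rw [abs_le]
      omega
    have hqW : q.1 + q.2 ≤ (W:ℤ) := by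
      by_contra hcon
      have h1 : ¬ (q.1 + q.2 < (W:ℤ)) := by omega
      have h2 : (W:ℤ) < q.1 := by omega
      have := hq.2
      rw [hct] at this
      simp only [if_neg h1, if_pos h2] at this
      exact Bool.false_ne_true this
    have hrn : r.1 + r.2 = (W:ℤ) + H := by rw [hnz]; exact hr3
    obtain ⟨w, hwφ, chain⟩ := cross (φ := fun v : Cell => v.1 + v.2) hstep crq
      (m := (W:ℤ)) hqW (show (W:ℤ) < r.1 + r.2 by omega)
    have hwφ' : w.1 + w.2 = (W:ℤ) := hwφ
    have hgood : ∀ x : Cell, YB (W+H) x → ct x = true → (W:ℤ) ≤ x.1 + x.2 →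
        (RB W H (ψ x) ∧ γ (ψ x) = true) := by
      intro x hYB hc hφ
      have hx1 : ¬ (x.1 + x.2 < (W:ℤ)) := by omega
      have hx2 : ¬ ((W:ℤ) < x.1) := by
        intro hcon
        rw [hct] at hc
        simp only [if_neg hx1, if_pos hcon] at hc
        exact Bool.false_ne_true hc
      rw [hct] at hc
      simp only [if_neg hx1, if_neg hx2] at hc
      obtain ⟨hb1, hb2, hb3⟩ := hYB
      rw [← hnz] at hb3
      exact ⟨⟨show (0:ℤ) ≤ x.1 by omega, show x.1 ≤ (W:ℤ) by omega,
        show (0:ℤ) ≤ x.2 - (W:ℤ) + x.1 by omega, show x.2 - (W:ℤ) + x.1 ≤ (H:ℤ) by omega⟩, hc⟩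
    have final : Conn AdjR (fun v => RB W H v ∧ γ v = true) (ψ r) (ψ w) := by
      refine rtg_map ψ ?_ chain
      rintro a c ⟨⟨hadj, hYP⟩, hm⟩
      exact ⟨hadjψ _ _ hadj, hgood c hYP.1 hYP.2 hm⟩
    refine ⟨ψ r, ψ w, show r.2 - (W:ℤ) + r.1 = (H:ℤ) by omega,
      show w.2 - (W:ℤ) + w.1 = 0 by omega,
      hgood r hr.1 hr.2 (by omega), final⟩
  | false =>
    right
    have hstep : ∀ a b : Cell, (AdjY a b ∧ YP (W+H) ct false b) →
        |b.1 - a.1| ≤ 1 := by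
      intro a b hab
      have h1 := dirsY_fst _ hab.1
      have h2 : (b - a).1 = b.1 - a.1 := rfl
      rw [abs_le]
      omega
    have hqW : (W:ℤ) ≤ q.1 := by
      by_contra hcon
      have h1 : q.1 + q.2 < (W:ℤ) := by omega
      have := hq.2
      rw [hct] at this
      simp only [if_pos h1] at this
      exact Bool.noConfusion this
    obtain ⟨w, hwφ, chain⟩ := cross' (φ := fun v : Cell => v.1) hstep cpq
      (m := (W:ℤ)) hqW (show p.1 < (W:ℤ) by omega)
    have hwφ' : w.1 = (W:ℤ) := hwφ
    have hgood : ∀ x : Cell, YB (W+H) x → ct x = false → x.1 ≤ (W:ℤ) →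
        (RB W H (ψ x) ∧ γ (ψ x) = false) := by
      intro x hYB hc hφ
      have hx1 : ¬ (x.1 + x.2 < (W:ℤ)) := by
        intro hcon
        rw [hct] at hc
        simp only [if_pos hcon] at hc
        exact Bool.noConfusion hc
      have hx2 : ¬ ((W:ℤ) < x.1) := by omega
      rw [hct] at hc
      simp only [if_neg hx1, if_neg hx2] at hc
      obtain ⟨hb1, hb2, hb3⟩ := hYB
      rw [← hnz] at hb3
      exact ⟨⟨show (0:ℤ) ≤ x.1 by omega, show x.1 ≤ (W:ℤ) by omega,
        show (0:ℤ) ≤ x.2 - (W:ℤ) + x.1 by omega, show x.2 - (W:ℤ) + x.1 ≤ (H:ℤ) by omega⟩, hc⟩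
    have final : Conn AdjR (fun v => RB W H v ∧ γ v = false) (ψ p) (ψ w) := by
      refine rtg_map ψ ?_ chain
      rintro a c ⟨⟨hadj, hYP⟩, hm⟩
      exact ⟨hadjψ _ _ hadj, hgood c hYP.1 hYP.2 hm⟩
    refine ⟨ψ p, ψ w, show p.1 = (0:ℤ) by omega, show w.1 = (W:ℤ) by omega,
      hgood p hp.1 hp.2 (by omega), final⟩


lemma clopen_sep {X : Type*} [TopologicalSpace X] [CompactSpace X] [T2Space X]
    {A B : Set X} (hA : IsClosed A) (hB : IsClosed B)
    (h : ∀ a ∈ A, connectedComponent a ∩ B = ∅) :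
    ∃ K : Set X, IsClopen K ∧ A ⊆ K ∧ K ∩ B = ∅ := by
  have step1 : ∀ a ∈ A, ∃ K : Set X, IsClopen K ∧ a ∈ K ∧ K ∩ B = ∅ := by
    intro a ha
    have hBc : IsCompact B := hB.isCompact
    haveI : Nonempty {Z : Set X // IsClopen Z ∧ a ∈ Z} :=
      ⟨⟨Set.univ, isClopen_univ, trivial⟩⟩
    have hdisj : B ∩ ⋂ (Z : {Z : Set X // IsClopen Z ∧ a ∈ Z}), (Z : Set X) = ∅ := by
      rw [← connectedComponent_eq_iInter_isClopen a, inter_comm]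
      exact h a ha
    have hdir : Directed (· ⊇ ·) (fun Z : {Z : Set X // IsClopen Z ∧ a ∈ Z} => (Z : Set X)) := by
      intro Z1 Z2
      exact ⟨⟨Z1.1 ∩ Z2.1, Z1.2.1.inter Z2.2.1, Z1.2.2, Z2.2.2⟩,
        inter_subset_left, inter_subset_right⟩
    obtain ⟨Z, hZ⟩ := hBc.elim_directed_family_closed _ (fun Z => Z.2.1.isClosed) hdisj hdir
    exact ⟨Z.1, Z.2.1, Z.2.2, by rw [inter_comm]; exact hZ⟩
  choose! K hK1 hK2 hK3 using step1
  have hAc : IsCompact A := hA.isCompact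
  have hcover : A ⊆ ⋃ a ∈ A, K a := fun a ha => mem_biUnion ha (hK2 a ha)
  obtain ⟨t, hts, htfin, htcov⟩ :=
    hAc.elim_finite_subcover_image (fun a ha => (hK1 a ha).isOpen) hcover
  refine ⟨⋃ a ∈ t, K a, htfin.isClopen_biUnion (fun a ha => hK1 a (hts ha)), htcov, ?_⟩
  ext x
  simp only [mem_inter_iff, mem_iUnion, mem_empty_iff_false, iff_false, not_and]
  rintro ⟨a, ha, hx⟩ hxB
  have := hK3 a (hts ha)
  rw [Set.eq_empty_iff_forall_notMem] at this
  exact this x ⟨hx, hxB⟩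

lemma pos_sep {X : Type*} [MetricSpace X] {A B : Set X} (hA : IsCompact A) (hB : IsCompact B)
    (hAn : A.Nonempty) (hBn : B.Nonempty) (hd : A ∩ B = ∅) :
    ∃ δ : ℝ, 0 < δ ∧ ∀ p ∈ A, ∀ q ∈ B, δ ≤ dist p q := by
  obtain ⟨z, hz, hmin⟩ := (hA.prod hB).exists_isMinOn (hAn.prod hBn)
    ((continuous_dist.comp (continuous_fst.prodMk continuous_snd)).continuousOn)
  have hzd : (0:ℝ) < dist z.1 z.2 := by
    rw [dist_pos]
    intro he
    have : z.1 ∈ A ∩ B := ⟨(mem_prod.mp hz).1, he ▸ (mem_prod.mp hz).2⟩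
    rw [hd] at this
    exact this
  exact ⟨dist z.1 z.2, hzd, fun p hp q hq =>
    isMinOn_iff.mp hmin (p, q) (mk_mem_prod hp hq)⟩

def mixedDirs : List Cell := (0,0) :: dirsR

lemma mixedDirs_bound : ∀ d ∈ mixedDirs, |d.1| ≤ 1 ∧ |d.1 + d.2| ≤ 2 := by decide

noncomputable section App
variable (f : ℝ → ℝ)

def vals (N : ℕ) (j : ℤ) : ℝ := f ((j : ℝ)/(N : ℝ))
def hh (N : ℕ) (v : Cell) : ℝ := vals f N (v.1 + v.2) - vals f N v.1
def Mixed (N : ℕ) (v : Cell) : Prop :=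
  ∃ d ∈ mixedDirs, min (hh f N v) (hh f N (v+d)) ≤ 0 ∧ 0 ≤ max (hh f N v) (hh f N (v+d))
def ppt (N : ℕ) (v : Cell) : AddCircle (1:ℝ) × AddCircle (1:ℝ) :=
  ((((v.1:ℝ)/(N:ℝ) : ℝ) : AddCircle (1:ℝ)), ((((v.1:ℝ)+(v.2:ℝ))/(N:ℝ) : ℝ) : AddCircle (1:ℝ)))

variable {f}

lemma ac_dist (a b : ℝ) : dist ((a : AddCircle (1:ℝ))) ((b : AddCircle (1:ℝ))) ≤ |a - b| := by
  rw [dist_eq_norm]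
  have h : ((a : AddCircle (1:ℝ))) - ((b : AddCircle (1:ℝ))) = ((a - b : ℝ) : AddCircle (1:ℝ)) := rfl
  rw [h]
  simpa using QuotientAddGroup.norm_mk_le_norm (S := AddSubgroup.zmultiples (1:ℝ)) (m := a - b)

lemma val_shift (hper : Function.Periodic f 1) (x : ℝ) (k : ℤ) : f (x + k) = f x := by
  simpa using (hper.int_mul k) x

lemma mixed_epoint (hf : Continuous f) (hper : Function.Periodic f 1) {N : ℕ} (hN : 0 < N)
    {v : Cell} (hv : Mixed f N v) :
    ∃ z : AddCircle (1:ℝ) × AddCircle (1:ℝ),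
      hper.lift z.1 = hper.lift z.2 ∧ dist z (ppt N v) ≤ 2/(N:ℝ) := by
  obtain ⟨d, hd, hmin, hmax⟩ := hv
  obtain ⟨hd1, hd2⟩ := mixedDirs_bound d hd
  have hNR : (0:ℝ) < (N:ℝ) := by exact_mod_cast hN
  set x0 : ℝ := (v.1:ℝ)/(N:ℝ) with hx0
  set y0 : ℝ := ((v.1:ℝ)+(v.2:ℝ))/(N:ℝ) with hy0
  set dx : ℝ := (d.1:ℝ)/(N:ℝ) with hdx
  set dy : ℝ := ((d.1:ℝ)+(d.2:ℝ))/(N:ℝ) with hdy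
  set g : ℝ → ℝ := fun s => f (y0 + s*dy) - f (x0 + s*dx) with hg
  have hg0 : g 0 = hh f N v := by
    simp only [hg, hh, vals, hx0, hy0]
    push_cast
    ring_nf
  have hg1 : g 1 = hh f N (v + d) := by
    simp only [hg, hh, vals, hx0, hy0, hdx, hdy, Prod.fst_add, Prod.snd_add]
    push_cast
    ring_nf
  have hgc : ContinuousOn g (uIcc (0:ℝ) 1) :=
    ((hf.comp (by continuity)).sub (hf.comp (by continuity))).continuousOn
  have h0mem : (0:ℝ) ∈ uIcc (g 0) (g 1) := by
    rw [Set.mem_uIcc, hg0, hg1]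
    rcases le_total (hh f N v) (hh f N (v+d)) with h | h
    · left; exact ⟨by simpa [min_eq_left h] using hmin, by simpa [max_eq_right h] using hmax⟩
    · right; exact ⟨by simpa [min_eq_right h] using hmin, by simpa [max_eq_left h] using hmax⟩
  obtain ⟨s, hs, hgs⟩ := intermediate_value_uIcc hgc h0mem
  rw [uIcc_of_le (zero_le_one)] at hs
  have hsabs : |s| ≤ 1 := abs_le.mpr ⟨by linarith [hs.1], hs.2⟩
  refine ⟨(((x0 + s*dx : ℝ) : AddCircle (1:ℝ)), ((y0 + s*dy : ℝ) : AddCircle (1:ℝ))), ?_, ?_⟩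
  · simp only [Function.Periodic.lift_coe]
    have : f (y0 + s*dy) - f (x0 + s*dx) = 0 := hgs
    linarith
  · rw [Prod.dist_eq]
    have hb1 : |(d.1:ℝ)| ≤ 1 := by exact_mod_cast hd1
    have hb2 : |(d.1:ℝ)+(d.2:ℝ)| ≤ 2 := by exact_mod_cast hd2
    have hxb : dist (((x0 + s*dx : ℝ) : AddCircle (1:ℝ))) (((x0 : ℝ) : AddCircle (1:ℝ))) ≤ 2/(N:ℝ) := by
      refine (ac_dist _ _).trans ?_
      rw [add_sub_cancel_left, abs_mul, hdx, abs_div, abs_of_pos hNR]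
      calc |s| * (|(d.1:ℝ)|/(N:ℝ)) ≤ 1 * (2/(N:ℝ)) := by
            apply mul_le_mul hsabs ?_ (by positivity) zero_le_one
            gcongr
            linarith
        _ = 2/(N:ℝ) := one_mul _
    have hyb : dist (((y0 + s*dy : ℝ) : AddCircle (1:ℝ))) (((y0 : ℝ) : AddCircle (1:ℝ))) ≤ 2/(N:ℝ) := by
      refine (ac_dist _ _).trans ?_
      rw [add_sub_cancel_left, abs_mul, hdy, abs_div, abs_of_pos hNR]
      calc |s| * (|(d.1:ℝ)+(d.2:ℝ)|/(N:ℝ)) ≤ 1 * (2/(N:ℝ)) := by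
            apply mul_le_mul hsabs ?_ (by positivity) zero_le_one
            gcongr
        _ = 2/(N:ℝ) := one_mul _
    exact max_le hxb hyb
end App
lemma dirsR_bound : ∀ d ∈ dirsR, |d.1| ≤ 1 ∧ |d.1 + d.2| ≤ 2 := by decide

noncomputable section App2
variable {f : ℝ → ℝ}

lemma vals_congr (hper : Function.Periodic f 1) {N : ℕ} (hN : 0 < N) {i j : ℤ}
    (h : (N:ℤ) ∣ (i - j)) : vals f N i = vals f N j := by
  obtain ⟨k, hk⟩ := h
  have hNR : (0:ℝ) < (N:ℝ) := by exact_mod_cast hN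
  have hi : (i:ℝ)/(N:ℝ) = (j:ℝ)/(N:ℝ) + (k:ℤ) := by
    have : (i:ℝ) = (j:ℝ) + (N:ℝ)*(k:ℝ) := by exact_mod_cast congrArg (fun t : ℤ => (t:ℝ)) (by linarith [hk] : i = j + N*k)
    rw [this]
    field_simp
  rw [vals, vals, hi]
  simpa using (hper.int_mul k) ((j:ℝ)/(N:ℝ))

lemma exists_grid_min (hper : Function.Periodic f 1) (N : ℕ) (hN : 0 < N) :
    ∃ ib : ℤ, ∀ j : ℤ, vals f N ib ≤ vals f N j := by
  obtain ⟨rb, hrb, hmin⟩ := (Finset.range N).exists_min_image (fun r => vals f N (r:ℤ))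
    ⟨0, Finset.mem_range.mpr hN⟩
  refine ⟨(rb:ℤ), fun j => ?_⟩
  have h1 : vals f N j = vals f N (j % N) := by
    refine (vals_congr hper hN ?_).symm
    have h := (Int.dvd_self_sub_of_emod_eq (a := j) (b := (N:ℤ)) rfl).neg_right
    rwa [neg_sub] at h
  have h2 : 0 ≤ j % (N:ℤ) := Int.emod_nonneg j (by exact_mod_cast hN.ne')
  have h3 : j % (N:ℤ) < N := Int.emod_lt_of_pos j (by exact_mod_cast hN)
  have h4 : ((j % (N:ℤ)).toNat : ℤ) = j % N := Int.toNat_of_nonneg h2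
  have h5 := hmin (j % (N:ℤ)).toNat (Finset.mem_range.mpr (by omega))
  rw [h4] at h5
  rw [h1]
  exact h5

lemma exists_grid_max (hper : Function.Periodic f 1) (N : ℕ) (hN : 0 < N) :
    ∃ ia : ℤ, ∀ j : ℤ, vals f N j ≤ vals f N ia := by
  obtain ⟨ia, hia⟩ := exists_grid_min (f := fun x => -(f x)) (by
    intro x; simp [hper x]) N hN
  exact ⟨ia, fun j => by have := hia j; simp only [vals] at this ⊢; linarith⟩

lemma ppt_adj_dist {N : ℕ} (hN : 0 < N) {u w : Cell} (hadj : w - u ∈ dirsR) :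
    dist (ppt N u) (ppt N w) ≤ 2/(N:ℝ) := by
  obtain ⟨hd1, hd2⟩ := dirsR_bound _ hadj
  have hNR : (0:ℝ) < (N:ℝ) := by exact_mod_cast hN
  have hb1 : |((w - u).1 : ℝ)| ≤ 1 := by exact_mod_cast hd1
  have hb2 : |((w - u).1 : ℝ) + ((w - u).2 : ℝ)| ≤ 2 := by
    have : ((w-u).1 : ℝ) + ((w-u).2 : ℝ) = (((w-u).1 + (w-u).2 : ℤ) : ℝ) := by push_cast; ring
    rw [this]; exact_mod_cast hd2
  have hw1 : (w.1 : ℝ) = (u.1 : ℝ) + ((w-u).1 : ℝ) := by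
    have : (w-u).1 = w.1 - u.1 := rfl
    rw [this]; push_cast; ring
  have hw2 : (w.2 : ℝ) = (u.2 : ℝ) + ((w-u).2 : ℝ) := by
    have : (w-u).2 = w.2 - u.2 := rfl
    rw [this]; push_cast; ring
  rw [Prod.dist_eq]
  refine max_le ?_ ?_
  · refine (ac_dist _ _).trans ?_
    rw [hw1]
    have he : (u.1:ℝ)/(N:ℝ) - ((u.1:ℝ) + ((w-u).1:ℝ))/(N:ℝ) = -(((w-u).1:ℝ))/(N:ℝ) := by ring
    rw [he, abs_div, abs_of_pos hNR, abs_neg]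
    gcongr
    linarith
  · refine (ac_dist _ _).trans ?_
    rw [hw1, hw2]
    have he : ((u.1:ℝ)+(u.2:ℝ))/(N:ℝ) - ((u.1:ℝ) + ((w-u).1:ℝ) + ((u.2:ℝ) + ((w-u).2:ℝ)))/(N:ℝ)
        = -((((w-u).1:ℝ) + ((w-u).2:ℝ)))/(N:ℝ) := by ring
    rw [he, abs_div, abs_of_pos hNR, abs_neg]
    gcongr

lemma ppt_mem_AD {N n : ℕ} (hNn : N = 2*n) (hN : 0 < N) {v : Cell} (hv : v.2 = (n:ℤ)) :
    (ppt N v).2 = (ppt N v).1 + ((1/2 : ℝ) : AddCircle (1:ℝ)) := by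
  have hNR : (0:ℝ) < (N:ℝ) := by exact_mod_cast hN
  have h1 : ((v.1:ℝ)+(v.2:ℝ))/(N:ℝ) = (v.1:ℝ)/(N:ℝ) + 1/2 := by
    rw [hv]
    have hn : ((n:ℤ):ℝ) = (n:ℝ) := by push_cast; ring
    rw [hn, hNn]
    have h2n : ((2*n : ℕ):ℝ) = 2*(n:ℝ) := by push_cast; ring
    rw [h2n]
    have hnR : (0:ℝ) < (n:ℝ) := by
      rw [hNn] at hN; have : 0 < n := by omega
      exact_mod_cast this
    field_simp
  show (((((v.1:ℝ)+(v.2:ℝ))/(N:ℝ)) : ℝ) : AddCircle (1:ℝ)) = _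
  rw [h1]
  rfl

lemma ppt_mem_DG {N : ℕ} {v : Cell} (hv : v.2 = 0) : (ppt N v).2 = (ppt N v).1 := by
  have h1 : ((v.1:ℝ)+(v.2:ℝ))/(N:ℝ) = (v.1:ℝ)/(N:ℝ) := by rw [hv]; norm_num
  show (((((v.1:ℝ)+(v.2:ℝ))/(N:ℝ)) : ℝ) : AddCircle (1:ℝ))
      = ((((v.1:ℝ)/(N:ℝ)) : ℝ) : AddCircle (1:ℝ))
  rw [h1]

end App2
end S18





open S18 in
set_option maxHeartbeats 1000000 in
theorem stmt_18 (f : ℝ → ℝ) (hf : Continuous f)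
    (hper : Function.Periodic f 1) (hnc : ¬ ∃ c : ℝ, ∀ x, f x = c) :
    (∃ x : ℝ, f (x + 1 / 2) = f x) ∧
    ∃ S : Set (AddCircle (1 : ℝ) × AddCircle (1 : ℝ)),
      IsConnected S ∧
      (∀ p ∈ S, hper.lift p.1 = hper.lift p.2) ∧
      (∃ x : AddCircle (1 : ℝ), (x, x + ((1 / 2 : ℝ) : AddCircle (1 : ℝ))) ∈ S) ∧
      (∃ y : AddCircle (1 : ℝ), (y, y) ∈ S) := by
  classical
  haveI : Fact ((0:ℝ) < 1) := ⟨one_pos⟩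
  have part1 : ∃ x : ℝ, f (x + 1 / 2) = f x := by
    set φ : ℝ → ℝ := fun x => f (x + 1/2) - f x with hφ
    have hφc : Continuous φ := Continuous.sub (hf.comp (continuous_id.add continuous_const)) hf
    have hsum : φ (1/2) = - φ 0 := by
      simp only [hφ]
      have h1 : (1:ℝ)/2 + 1/2 = 0 + 1 := by norm_num
      have h2 : (0:ℝ) + 1/2 = 1/2 := by norm_num
      rw [h1, h2, hper 0]
      ring
    have hmem : (0:ℝ) ∈ Set.uIcc (φ 0) (φ (1/2)) := by
      rw [Set.mem_uIcc]
      rcases le_total (φ 0) 0 with h | h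
      · left; exact ⟨h, by rw [hsum]; linarith⟩
      · right; exact ⟨by rw [hsum]; linarith, h⟩
    obtain ⟨x, _, hx⟩ := intermediate_value_uIcc hφc.continuousOn hmem
    refine ⟨x, ?_⟩
    have hx' : f (x + 1/2) - f x = 0 := hx
    linarith
  obtain ⟨x₀, hx₀⟩ := part1
  refine ⟨⟨x₀, hx₀⟩, ?_⟩
  set cc : AddCircle (1:ℝ) := ((1/2 : ℝ) : AddCircle (1:ℝ)) with hcc
  set E : Set (AddCircle (1:ℝ) × AddCircle (1:ℝ)) :=
    {z | hper.lift z.1 = hper.lift z.2} with hE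
  have hFc : Continuous (hper.lift : AddCircle (1:ℝ) → ℝ) := by
    rw [continuous_coinduced_dom]; exact hf
  have hEclosed : IsClosed E := isClosed_eq (hFc.comp continuous_fst) (hFc.comp continuous_snd)
  set AD : Set (AddCircle (1:ℝ) × AddCircle (1:ℝ)) := {z | z.2 = z.1 + cc} with hAD
  set DG : Set (AddCircle (1:ℝ) × AddCircle (1:ℝ)) := {z | z.2 = z.1} with hDG
  have hADclosed : IsClosed AD := isClosed_eq continuous_snd (continuous_fst.add continuous_const)
  have hDGclosed : IsClosed DG := isClosed_eq continuous_snd continuous_fst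
  have hcast : ∀ x : ℝ, ((x : AddCircle (1:ℝ)) + cc) = ((x + 1/2 : ℝ) : AddCircle (1:ℝ)) :=
    fun x => rfl
  have ha₀E : ((x₀ : AddCircle (1:ℝ)), (x₀ : AddCircle (1:ℝ)) + cc) ∈ E := by
    show hper.lift _ = hper.lift _
    rw [hcast x₀]
    simp only [Function.Periodic.lift_coe]
    exact hx₀.symm
  have ha₀AD : ((x₀ : AddCircle (1:ℝ)), (x₀ : AddCircle (1:ℝ)) + cc) ∈ AD := rfl
  by_cases hall : ∀ z ∈ E ∩ AD, connectedComponentIn E z ∩ DG = ∅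
  case neg =>
    push_neg at hall
    obtain ⟨a, haEAD, hne⟩ := hall
    obtain ⟨w, hwS, hwDG⟩ := hne
    refine ⟨connectedComponentIn E a, isConnected_connectedComponentIn_iff.mpr haEAD.1,
      ?_, ?_, ?_⟩
    · exact fun p hp => connectedComponentIn_subset E a hp
    · refine ⟨a.1, ?_⟩
      have h2 : (a.1, a.1 + cc) = a := by
        have h3 := haEAD.2
        simp only [hAD, Set.mem_setOf_eq] at h3
        exact Prod.ext rfl h3.symm
      rw [h2]
      exact mem_connectedComponentIn haEAD.1
    · refine ⟨w.1, ?_⟩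
      have h2 : (w.1, w.1) = w := by
        simp only [hDG, Set.mem_setOf_eq] at hwDG
        exact Prod.ext rfl hwDG.symm
      rw [h2]; exact hwS
  case pos =>
    exfalso
    have hEcpt : IsCompact E := hEclosed.isCompact
    haveI hcs : CompactSpace ↥E := isCompact_iff_compactSpace.mp hEcpt
    set A' : Set ↥E := {z : ↥E | (z : AddCircle (1:ℝ) × AddCircle (1:ℝ)) ∈ AD} with hA'
    set B' : Set ↥E := {z : ↥E | (z : AddCircle (1:ℝ) × AddCircle (1:ℝ)) ∈ DG} with hB'
    have hA'c : IsClosed A' := hADclosed.preimage continuous_subtype_val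
    have hB'c : IsClosed B' := hDGclosed.preimage continuous_subtype_val
    have hcomp : ∀ a ∈ A', connectedComponent a ∩ B' = ∅ := by
      intro a ha
      rw [Set.eq_empty_iff_forall_notMem]
      rintro b ⟨hb1, hb2⟩
      have himg := connectedComponentIn_eq_image (F := E) a.2
      have hbmem : (b : AddCircle (1:ℝ) × AddCircle (1:ℝ)) ∈
          connectedComponentIn E (a : AddCircle (1:ℝ) × AddCircle (1:ℝ)) ∩ DG := by
        constructor
        · rw [himg]
          exact ⟨b, by simpa using hb1, rfl⟩
        · exact hb2
      rw [hall (a : AddCircle (1:ℝ) × AddCircle (1:ℝ)) ⟨a.2, ha⟩] at hbmem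
      exact hbmem
    obtain ⟨K, hKclopen, hKA, hKB⟩ := clopen_sep hA'c hB'c hcomp
    set K' : Set (AddCircle (1:ℝ) × AddCircle (1:ℝ)) := Subtype.val '' K with hK'
    set L' : Set (AddCircle (1:ℝ) × AddCircle (1:ℝ)) := Subtype.val '' Kᶜ with hL'
    have hKcpt : IsCompact K' := (hKclopen.isClosed.isCompact).image continuous_subtype_val
    have hLcpt : IsCompact L' := (hKclopen.compl.isClosed.isCompact).image continuous_subtype_val
    have hKsubE : K' ⊆ E := by rintro z ⟨w, _, rfl⟩; exact w.2
    have hLsubE : L' ⊆ E := by rintro z ⟨w, _, rfl⟩; exact w.2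
    have hKL : K' ∩ L' = ∅ := by
      rw [Set.eq_empty_iff_forall_notMem]
      rintro z ⟨⟨w1, hw1, he1⟩, ⟨w2, hw2, he2⟩⟩
      have hww : w1 = w2 := Subtype.val_injective (he1.trans he2.symm)
      exact hw2 (hww ▸ hw1)
    have hEun : ∀ z ∈ E, z ∈ K' ∨ z ∈ L' := by
      intro z hz
      by_cases h : (⟨z, hz⟩ : ↥E) ∈ K
      · exact Or.inl ⟨⟨z, hz⟩, h, rfl⟩
      · exact Or.inr ⟨⟨z, hz⟩, h, rfl⟩
    have hEADK : ∀ z, z ∈ E → z ∈ AD → z ∈ K' := fun z hz hzad => ⟨⟨z, hz⟩, hKA hzad, rfl⟩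
    have hKDG : K' ∩ DG = ∅ := by
      rw [Set.eq_empty_iff_forall_notMem]
      rintro z ⟨⟨w, hw, rfl⟩, hzd⟩
      have hmem : w ∈ K ∩ B' := ⟨hw, hzd⟩
      rw [hKB] at hmem
      exact hmem
    have hLAD : L' ∩ AD = ∅ := by
      rw [Set.eq_empty_iff_forall_notMem]
      rintro z ⟨hzl, hzad⟩
      have h1 : z ∈ K' := hEADK z (hLsubE hzl) hzad
      have h2 : z ∈ K' ∩ L' := ⟨h1, hzl⟩
      rw [hKL] at h2; exact h2
    have hKne : K'.Nonempty := ⟨_, hEADK _ ha₀E ha₀AD⟩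
    have h00E : (((0:ℝ) : AddCircle (1:ℝ)), ((0:ℝ) : AddCircle (1:ℝ))) ∈ E := rfl
    have h00DG : (((0:ℝ) : AddCircle (1:ℝ)), ((0:ℝ) : AddCircle (1:ℝ))) ∈ DG := rfl
    have hLne : L'.Nonempty := by
      rcases hEun _ h00E with h | h
      · exfalso
        have hmem : (((0:ℝ) : AddCircle (1:ℝ)), ((0:ℝ) : AddCircle (1:ℝ))) ∈ K' ∩ DG :=
          ⟨h, h00DG⟩
        rw [hKDG] at hmem; exact hmem
      · exact ⟨_, h⟩
    have hADcpt : IsCompact AD := hADclosed.isCompact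
    have hDGcpt : IsCompact DG := hDGclosed.isCompact
    have hADne : AD.Nonempty := ⟨_, ha₀AD⟩
    have hDGne : DG.Nonempty := ⟨_, h00DG⟩
    obtain ⟨δ0, hδ0pos, hδ0⟩ := pos_sep hKcpt hLcpt hKne hLne hKL
    obtain ⟨δ1, hδ1pos, hδ1⟩ := pos_sep hLcpt hADcpt hLne hADne hLAD
    obtain ⟨δ2, hδ2pos, hδ2⟩ := pos_sep hKcpt hDGcpt hKne hDGne hKDG
    set δm : ℝ := min δ0 (min δ1 δ2) with hδm
    have hδmpos : 0 < δm := lt_min hδ0pos (lt_min hδ1pos hδ2pos)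
    have hδm0 : δm ≤ δ0 := min_le_left _ _
    have hδm1 : δm ≤ δ1 := le_trans (min_le_right _ _) (min_le_left _ _)
    have hδm2 : δm ≤ δ2 := le_trans (min_le_right _ _) (min_le_right _ _)
    have hnc0 : ∃ u : ℝ, f u ≠ f 0 := by
      by_contra h
      push_neg at h
      exact hnc ⟨f 0, h⟩
    obtain ⟨u₀, hu₀⟩ := hnc0
    set ε₁ : ℝ := |f u₀ - f 0| with hε₁
    have hε₁pos : 0 < ε₁ := by
      rw [hε₁, abs_pos, sub_ne_zero]; exact hu₀
    obtain ⟨δu, hδupos, hδu⟩ := Metric.continuous_iff.mp hf u₀ ε₁ hε₁pos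
    obtain ⟨n, hn⟩ := exists_nat_gt (max (6/δm) (1/δu))
    have hnpos : 0 < n := by
      have h1 : (0:ℝ) < 6/δm := by positivity
      have h2 : (0:ℝ) < (n:ℝ) := lt_of_lt_of_le h1 (le_trans (le_max_left _ _) (le_of_lt hn))
      exact_mod_cast h2
    set N : ℕ := 2*n with hNdef
    have hNpos : 0 < N := by omega
    have hNR : (0:ℝ) < (N:ℝ) := by exact_mod_cast hNpos
    have hnR : (0:ℝ) < (n:ℝ) := by exact_mod_cast hnpos
    have hnN : (n:ℝ) ≤ (N:ℝ) := by
      have : (n:ℕ) ≤ N := by omega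
      exact_mod_cast this
    have hn6 : 6/(N:ℝ) < δm := by
      have h1 : 6/δm < (n:ℝ) := lt_of_le_of_lt (le_max_left _ _) hn
      have h2 : 6/(n:ℝ) < δm := by
        rw [div_lt_iff₀ hnR]
        rw [div_lt_iff₀ hδmpos] at h1
        linarith
      have h3 : 6/(N:ℝ) ≤ 6/(n:ℝ) := by gcongr <;> norm_num
      linarith
    have h2m : 2/(N:ℝ) < δm := by
      have : 2/(N:ℝ) ≤ 6/(N:ℝ) := by gcongr <;> norm_num
      linarith
    have h1du : 1/(N:ℝ) < δu := by
      have h1 : 1/δu < (n:ℝ) := lt_of_le_of_lt (le_max_right _ _) hn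
      have h2 : 1/(n:ℝ) < δu := by
        rw [div_lt_iff₀ hnR]
        rw [div_lt_iff₀ hδupos] at h1
        linarith
      have h3 : 1/(N:ℝ) ≤ 1/(n:ℝ) := by gcongr <;> norm_num
      linarith
    obtain ⟨ib, hib⟩ := exists_grid_min hper N hNpos
    obtain ⟨ia', hia'⟩ := exists_grid_max hper N hNpos
    set j₀ : ℤ := ⌈u₀ * (N:ℝ)⌉ with hj₀
    have hj₀close : dist ((j₀:ℝ)/(N:ℝ)) u₀ < δu := by
      rw [Real.dist_eq]
      have h1 : u₀ * N ≤ (j₀:ℝ) := Int.le_ceil _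
      have h2 : (j₀:ℝ) < u₀ * N + 1 := Int.ceil_lt_add_one _
      have h3 : |(j₀:ℝ)/(N:ℝ) - u₀| < 1/(N:ℝ) := by
        rw [abs_lt]
        constructor
        · have : u₀ ≤ (j₀:ℝ)/(N:ℝ) := (le_div_iff₀ hNR).mpr (by linarith)
          have hpos : (0:ℝ) < 1/(N:ℝ) := by positivity
          linarith
        · have h4 : (j₀:ℝ)/(N:ℝ) < u₀ + 1/(N:ℝ) := by
            rw [div_lt_iff₀ hNR]
            have h5 : (u₀ + 1/(N:ℝ)) * N = u₀ * N + 1 := by field_simp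
            rw [h5]
            exact h2
          linarith
      linarith
    have hj₀ne : vals f N j₀ ≠ f 0 := by
      intro heq
      have h5 := hδu _ hj₀close
      have h6 : f ((j₀:ℝ)/(N:ℝ)) = f 0 := heq
      rw [h6, Real.dist_eq, hε₁] at h5
      rw [abs_sub_comm] at h5
      exact lt_irrefl _ h5
    have hvals0 : vals f N 0 = f 0 := by
      show f (((0:ℤ):ℝ)/(N:ℝ)) = f 0
      norm_num
    have hstrict : vals f N ib < vals f N ia' := by
      rcases lt_or_ge (vals f N ib) (vals f N ia') with h | h
      · exact h
      · exfalso
        have hall_eq : ∀ j : ℤ, vals f N j = vals f N ib :=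
          fun j => le_antisymm (le_trans (hia' j) h) (hib j)
        have h7 := (hall_eq j₀).trans (hall_eq 0).symm
        rw [hvals0] at h7
        exact hj₀ne h7
    set θ : ℤ := (ia' - ib) % (N:ℤ) with hθdef
    have hNZ : ((N:ℤ)) ≠ 0 := by exact_mod_cast hNpos.ne'
    have hθ0 : 0 ≤ θ := Int.emod_nonneg _ hNZ
    have hθN : θ < (N:ℤ) := Int.emod_lt_of_pos _ (by exact_mod_cast hNpos)
    have hdvd : (N:ℤ) ∣ (ib + θ - ia') := by
      have h := (Int.dvd_self_sub_of_emod_eq (a := ia' - ib) (b := (N:ℤ)) rfl)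
      have h2 : ib + θ - ia' = -((ia' - ib) - θ) := by rw [hθdef]; ring
      rw [h2]; exact h.neg_right
    have hvia : vals f N (ib + θ) = vals f N ia' := vals_congr hper hNpos hdvd
    have hθpos : 0 < θ := by
      rcases lt_or_ge 0 θ with h | h
      · exact h
      · exfalso
        have hθeq : θ = 0 := by omega
        rw [hθeq, add_zero] at hvia
        rw [hvia] at hstrict
        exact lt_irrefl _ hstrict
    set σ : Cell → Cell := fun v => (v.1 + ib, v.2) with hσ
    set γ : Cell → Bool := fun v => if Mixed f N (σ v) then true else false with hγ
    have hγt : ∀ v, γ v = true → Mixed f N (σ v) := by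
      intro v hv
      by_contra h
      rw [hγ] at hv
      simp only [if_neg h] at hv
      exact Bool.noConfusion hv
    have hγf : ∀ v, γ v = false → ¬ Mixed f N (σ v) := by
      intro v hv h
      rw [hγ] at hv
      simp only [if_pos h] at hv
      exact Bool.noConfusion hv
    have hσsub : ∀ w x : Cell, σ x - σ w = x - w := by
      intro w x
      simp only [hσ, Prod.ext_iff, Prod.fst_sub, Prod.snd_sub]
      exact ⟨by ring, trivial⟩
    have hσadd : ∀ w x : Cell, σ w + (x - w) = σ x := by
      intro w x
      simp only [hσ, Prod.ext_iff, Prod.fst_add, Prod.snd_add, Prod.fst_sub, Prod.snd_sub]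
      constructor <;> ring
    have hmix0 : ∀ v : Cell, 0 ≤ hh f N v → ¬ Mixed f N v → 0 < hh f N v := by
      intro v h0 hnm
      rcases lt_or_eq_of_le h0 with h | h
      · exact h
      · exfalso
        apply hnm
        refine ⟨(0,0), by unfold mixedDirs; exact List.mem_cons_self, ?_, ?_⟩
        · have hv0 : v + ((0,0) : Cell) = v := by
            simp [Prod.ext_iff]
          rw [hv0, min_self, ← h]
        · have hv0 : v + ((0,0) : Cell) = v := by
            simp [Prod.ext_iff]
          rw [hv0, max_self, ← h]
    have hsign : ∀ w x : Cell, AdjR w x → ¬ Mixed f N (σ w) → 0 < hh f N (σ w) →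
        0 < hh f N (σ x) := by
      intro w x hadj hnm hpos
      by_contra hle
      push_neg at hle
      apply hnm
      have hxw : σ w + (x - w) = σ x := hσadd w x
      refine ⟨x - w, List.mem_cons_of_mem _ hadj, ?_, ?_⟩
      · rw [hxw]
        exact le_trans (min_le_right _ _) hle
      · rw [hxw]
        exact le_trans (le_of_lt hpos) (le_max_left _ _)
    rcases disc N n (by omega) (by omega) γ with
      ⟨zt, zb, hzt2, hzb2, ⟨hztRB, hztγ⟩, chainB⟩ | ⟨zl, zr, hzl1, hzr1, ⟨hzlRB, hzlγ⟩, chainW⟩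
    · -- black chain : E-points stay in K', but end on the diagonal
      have hblack : ∀ v : Cell, Conn AdjR (fun v => RB N n v ∧ γ v = true) zt v →
          ∃ z, z ∈ K' ∧ dist z (ppt N (σ v)) ≤ 2/(N:ℝ) := by
        intro v hv
        induction hv with
        | refl =>
          obtain ⟨z, hzE, hzd⟩ := mixed_epoint hf hper hNpos (hγt zt hztγ)
          have hzE' : z ∈ E := hzE
          refine ⟨z, ?_, hzd⟩
          rcases hEun z hzE' with h | h
          · exact h
          · exfalso
            have hppt : ppt N (σ zt) ∈ AD := by
              show (ppt N (σ zt)).2 = (ppt N (σ zt)).1 + cc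
              rw [hcc]
              exact ppt_mem_AD hNdef hNpos (show (σ zt).2 = (n:ℤ) from hzt2)
            have h8 := hδ1 z h _ hppt
            linarith
        | @tail w x hzw hstep ih =>
          obtain ⟨z, hzK, hzd⟩ := ih
          obtain ⟨z', hz'E, hz'd⟩ := mixed_epoint hf hper hNpos (hγt x hstep.2.2)
          have hz'E' : z' ∈ E := hz'E
          refine ⟨z', ?_, hz'd⟩
          rcases hEun z' hz'E' with h | h
          · exact h
          · exfalso
            have hpd : dist (ppt N (σ w)) (ppt N (σ x)) ≤ 2/(N:ℝ) := by
              apply ppt_adj_dist hNpos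
              show σ x - σ w ∈ dirsR
              rw [hσsub w x]
              exact hstep.1
            have hdzz : dist z z' ≤ 6/(N:ℝ) := by
              have ht := dist_triangle4 z (ppt N (σ w)) (ppt N (σ x)) z'
              have h9 : dist (ppt N (σ x)) z' = dist z' (ppt N (σ x)) := dist_comm _ _
              rw [h9] at ht
              have h10 : (2:ℝ)/(N:ℝ) + 2/(N:ℝ) + 2/(N:ℝ) = 6/(N:ℝ) := by ring
              linarith
            have h8 := hδ0 z hzK z' h
            linarith
      obtain ⟨z, hzK, hzd⟩ := hblack zb chainB
      have hppt : ppt N (σ zb) ∈ DG :=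
        ppt_mem_DG (show (σ zb).2 = 0 from hzb2)
      have h8 := hδ2 z hzK _ hppt
      linarith
    · -- white chain : constant positive sign, but hits the max column
      have hbase : 0 < hh f N (σ zl) := by
        apply hmix0 _ ?_ (hγf zl hzlγ)
        show 0 ≤ vals f N ((σ zl).1 + (σ zl).2) - vals f N ((σ zl).1)
        have h1 : (σ zl).1 = ib := by
          show zl.1 + ib = ib
          rw [hzl1, zero_add]
        rw [h1]
        have := hib (ib + (σ zl).2)
        have h2 : (σ zl).2 = zl.2 := rfl
        linarith [hib (ib + (σ zl).2)]
      have htrans : ∀ v : Cell, Conn AdjR (fun v => RB N n v ∧ γ v = false) zl v →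
          0 < hh f N (σ v) := by
        intro v hv
        induction hv with
        | refl => exact hbase
        | @tail w x hzw hstep ih =>
          have hw : RB N n w ∧ γ w = false := conn_last hzw ⟨hzlRB, hzlγ⟩
          exact hsign w x hstep.1 (hγf w hw.2) ih
      have hstepφ : ∀ a b : Cell, (AdjR a b ∧ (RB N n b ∧ γ b = false)) →
          |b.1 - a.1| ≤ 1 := by
        intro a b hab
        have h1 := (dirsR_bound _ hab.1).1
        have h2 : (b - a).1 = b.1 - a.1 := rfl
        rw [← h2]; exact h1
      obtain ⟨w', hw'1, chain'⟩ := cross' (φ := fun v : Cell => v.1) hstepφ chainW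
        (m := θ) (show θ ≤ zr.1 by rw [hzr1]; omega)
        (show zl.1 < θ by rw [hzl1]; omega)
      have hw'pos : 0 < hh f N (σ w') :=
        htrans w' (Relation.ReflTransGen.mono (fun a b hab => hab.1) _ _ chain')
      have hw'col : (σ w').1 = ib + θ := by
        show w'.1 + ib = ib + θ
        have : w'.1 = θ := hw'1
        omega
      have hle : hh f N (σ w') ≤ 0 := by
        show vals f N ((σ w').1 + (σ w').2) - vals f N ((σ w').1) ≤ 0
        rw [hw'col]
        have h1 := hia' (ib + θ + (σ w').2)
        linarith [hvia]
      linarith
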